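/- Let M be a homogeneous, monotone, repetition invariant mean on (0,∞). If there exist constants C, D > 0 and n₀ ∈ ℕ such that M(1, 1/2, …, 1/n) ≥ C·(ln n)^D / n for all n ≥ n₀, then M is not a weak-Hardy mean. -/

import Mathlib

/-- `M` is a mean on the set `I`: its value on every nonempty tuple from `I`
lies between the minimum and the maximum of the tuple. -/
def IsMeanOn (I : Set ℝ) (M : ∀ n : ℕ, (Fin n → ℝ) → ℝ) : Prop :=
  ∀ (n : ℕ) (a : Fin (n + 1) → ℝ), (∀ i, a i ∈ I) →
    (⨅ i, a i) ≤ M (n + 1) a ∧ M (n + 1) a ≤ ⨆ i, a i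

/-- `M` is (positively) homogeneous. -/
def IsHomogeneousMean (M : ∀ n : ℕ, (Fin n → ℝ) → ℝ) : Prop :=
  ∀ (t : ℝ), 0 < t → ∀ (n : ℕ) (a : Fin n → ℝ), (∀ i, 0 < a i) →
    M n (fun i => t * a i) = t * M n a

/-- `M` is monotone (nondecreasing in each variable). -/
def IsMonotoneMean (M : ∀ n : ℕ, (Fin n → ℝ) → ℝ) : Prop :=
  ∀ (n : ℕ) (a b : Fin n → ℝ), (∀ i, 0 < a i) → (∀ i, a i ≤ b i) →
    M n a ≤ M n b

/-- `M` is repetition invariant: repeating every entry `m` times does not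
change the value of the mean. -/
def IsRepetitionInvariant (M : ∀ n : ℕ, (Fin n → ℝ) → ℝ) : Prop :=
  ∀ (n m : ℕ), 0 < m → ∀ (a : Fin n → ℝ), (∀ i, 0 < a i) →
    M (n * m) (fun i => a ⟨(i : ℕ) / m, Nat.div_lt_of_lt_mul
      (lt_of_lt_of_eq i.isLt (Nat.mul_comm n m))⟩) = M n a

/-- `M` is a weak-Hardy mean on `I`: for every summable sequence in `I` the
sequence of running means is summable. -/
def IsWeakHardyMean (I : Set ℝ) (M : ∀ n : ℕ, (Fin n → ℝ) → ℝ) : Prop :=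
  ∀ a : ℕ → ℝ, (∀ n, a n ∈ I) → Summable a →
    Summable (fun n => M (n + 1) (fun k : Fin (n + 1) => a (k : ℕ)))


open Real
set_option maxHeartbeats 1000000

/-- auxiliary: `(log x)^s / x` is antitone on `[3, ∞)` for `s ≤ 0`. -/
private lemma aux_dec {s : ℝ} (hs : s ≤ 0) {x y : ℝ} (hx : 3 ≤ x) (hxy : x ≤ y) :
    Real.log y ^ s / y ≤ Real.log x ^ s / x := by
  have hx0 : (0:ℝ) < x := by linarith
  have hlx : 0 < Real.log x := Real.log_pos (by linarith)
  have h1 : Real.log y ^ s ≤ Real.log x ^ s :=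
    Real.rpow_le_rpow_of_nonpos hlx (Real.log_le_log hx0 hxy) hs
  exact div_le_div₀ (Real.rpow_nonneg hlx.le s) h1 hx0 hxy

private noncomputable def ffun (s : ℝ) (n : ℕ) : ℝ :=
  if n < 3 then Real.log 3 ^ s / 3 else Real.log n ^ s / n

private lemma ffun_nonneg (s : ℝ) (n : ℕ) : 0 ≤ ffun s n := by
  unfold ffun
  split
  · positivity
  · rename_i h
    have : (1:ℝ) ≤ (n:ℝ) := by
      have h3 : (1:ℕ) ≤ n := by omega
      exact_mod_cast h3
    have := Real.log_nonneg this
    positivity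

private lemma ffun_eq {s : ℝ} {n : ℕ} (h : 3 ≤ n) : ffun s n = Real.log n ^ s / n := by
  simp [ffun, Nat.not_lt.mpr h, show ¬ n < 3 by omega]

private lemma ffun_anti {s : ℝ} (hs : s ≤ 0) : ∀ ⦃m n : ℕ⦄, 0 < m → m ≤ n →
    ffun s n ≤ ffun s m := by
  intro m n hm hmn
  by_cases hn3 : n < 3
  · have hm3 : m < 3 := by omega
    simp [ffun, hn3, hm3]
  · have hn : (3:ℝ) ≤ (n:ℝ) := by exact_mod_cast Nat.not_lt.mp hn3
    rw [ffun_eq (Nat.not_lt.mp hn3)]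
    by_cases hm3 : m < 3
    · have : ffun s m = Real.log 3 ^ s / 3 := by simp [ffun, hm3]
      rw [this]
      exact aux_dec hs le_rfl hn
    · rw [ffun_eq (Nat.not_lt.mp hm3)]
      have h1 : (3:ℝ) ≤ (m:ℝ) := by exact_mod_cast Nat.not_lt.mp hm3
      have h2 : (m:ℝ) ≤ (n:ℝ) := Nat.cast_le.mpr hmn
      exact aux_dec hs h1 h2

private lemma not_summable_ffun {s : ℝ} (hs1 : -1 < s) (hs0 : s ≤ 0) :
    ¬ Summable (ffun s) := by
  intro hsum
  have h2 : Summable (fun k : ℕ => (2:ℝ) ^ k * ffun s (2 ^ k)) :=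
    (summable_condensed_iff_of_nonneg (ffun_nonneg s) (ffun_anti hs0)).mpr hsum
  have h3 : Summable (fun k : ℕ => (2:ℝ) ^ (k + 2) * ffun s (2 ^ (k + 2))) :=
    (summable_nat_add_iff (f := fun k : ℕ => (2:ℝ) ^ k * ffun s (2 ^ k)) 2).mpr h2
  have h4 : ∀ k : ℕ, (2:ℝ) ^ (k + 2) * ffun s (2 ^ (k + 2))
      = ((k + 2 : ℕ) : ℝ) ^ s * Real.log 2 ^ s := by
    intro k
    have h4' : (4:ℕ) ≤ 2 ^ (k + 2) := by
      calc (4:ℕ) = 2 ^ 2 := rfl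
      _ ≤ 2 ^ (k + 2) := Nat.pow_le_pow_right (by norm_num) (by omega)
    rw [ffun_eq (by omega)]
    have hcast : ((2 ^ (k + 2) : ℕ) : ℝ) = (2:ℝ) ^ (k + 2) := by push_cast; ring
    rw [hcast, Real.log_pow]
    rw [← Real.mul_rpow (by positivity) (Real.log_nonneg (by norm_num))]
    have h2pos : (0:ℝ) < (2:ℝ) ^ (k + 2) := by positivity
    field_simp
  simp_rw [h4] at h3
  have hlog2 : (0:ℝ) < Real.log 2 ^ s := Real.rpow_pos_of_pos (Real.log_pos (by norm_num)) s
  have h5 : Summable (fun k : ℕ => ((k + 2 : ℕ) : ℝ) ^ s) := by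
    have := h3.mul_right (Real.log 2 ^ s)⁻¹
    simpa [mul_assoc, mul_inv_cancel₀ hlog2.ne'] using this
  have h6 : Summable (fun k : ℕ => (k : ℝ) ^ s) := (summable_nat_add_iff (f := fun k : ℕ => (k : ℝ) ^ s) 2).mp h5
  have := summable_nat_rpow.mp h6
  linarith

open Real

private lemma aux_inc {p : ℝ} (hp : 0 ≤ p) {x y : ℝ} (hx : 2 ≤ x) (hxy : x ≤ y) :
    x * Real.log x ^ p ≤ y * Real.log y ^ p := by
  have hlx : (0:ℝ) ≤ Real.log x := Real.log_nonneg (by linarith)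
  have h1 : Real.log x ^ p ≤ Real.log y ^ p :=
    Real.rpow_le_rpow hlx (Real.log_le_log (by linarith) hxy) hp
  have := Real.rpow_nonneg hlx p
  nlinarith

private noncomputable def gfun (p : ℝ) (n : ℕ) : ℝ :=
  if n < 2 then (2 * Real.log 2 ^ p)⁻¹ else ((n:ℝ) * Real.log n ^ p)⁻¹

private lemma gfun_pos {p : ℝ} (n : ℕ) : 0 < gfun p n := by
  have hl2 : (0:ℝ) < Real.log 2 := Real.log_pos (by norm_num)
  unfold gfun
  split
  · positivity
  · rename_i h
    have h2 : (2:ℝ) ≤ (n:ℝ) := by exact_mod_cast Nat.not_lt.mp h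
    have hln : (0:ℝ) < Real.log n := Real.log_pos (by linarith)
    positivity

private lemma gfun_eq {p : ℝ} {n : ℕ} (h : 2 ≤ n) : gfun p n = ((n:ℝ) * Real.log n ^ p)⁻¹ := by
  simp [gfun, show ¬ n < 2 by omega]

private lemma gfun_anti {p : ℝ} (hp : 0 ≤ p) : ∀ ⦃m n : ℕ⦄, 0 < m → m ≤ n →
    gfun p n ≤ gfun p m := by
  have hl2 : (0:ℝ) < Real.log 2 := Real.log_pos (by norm_num)
  intro m n hm hmn
  by_cases hn2 : n < 2
  · have hm2 : m < 2 := by omega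
    simp [gfun, hn2, hm2]
  · have hn : (2:ℝ) ≤ (n:ℝ) := by exact_mod_cast Nat.not_lt.mp hn2
    rw [gfun_eq (Nat.not_lt.mp hn2)]
    have key : ∀ x : ℝ, 2 ≤ x → x ≤ (n:ℝ) →
        ((n:ℝ) * Real.log n ^ p)⁻¹ ≤ (x * Real.log x ^ p)⁻¹ := by
      intro x hx hxn
      have hlx : (0:ℝ) < Real.log x := Real.log_pos (by linarith)
      have : (0:ℝ) < x * Real.log x ^ p := by positivity
      exact inv_anti₀ this (aux_inc hp hx hxn)
    by_cases hm2 : m < 2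
    · have : gfun p m = (2 * Real.log 2 ^ p)⁻¹ := by simp [gfun, hm2]
      rw [this]
      simpa using key 2 le_rfl hn
    · rw [gfun_eq (Nat.not_lt.mp hm2)]
      exact key (m:ℝ) (by exact_mod_cast Nat.not_lt.mp hm2) (Nat.cast_le.mpr hmn)

private lemma summable_gfun {p : ℝ} (hp : 1 < p) : Summable (gfun p) := by
  have hl2 : (0:ℝ) < Real.log 2 := Real.log_pos (by norm_num)
  rw [← summable_condensed_iff_of_nonneg (fun n => (gfun_pos n).le) (gfun_anti (by linarith))]
  rw [← summable_nat_add_iff (f := fun k : ℕ => (2:ℝ) ^ k * gfun p (2 ^ k)) 1]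
  have h4 : ∀ k : ℕ, (2:ℝ) ^ (k + 1) * gfun p (2 ^ (k + 1))
      = ((k + 1 : ℕ) : ℝ) ^ (-p) * (Real.log 2 ^ p)⁻¹ := by
    intro k
    have h2' : (2:ℕ) ≤ 2 ^ (k + 1) := by
      calc (2:ℕ) = 2 ^ 1 := rfl
      _ ≤ 2 ^ (k + 1) := Nat.pow_le_pow_right (by norm_num) (by omega)
    rw [gfun_eq h2']
    have hcast : ((2 ^ (k + 1) : ℕ) : ℝ) = (2:ℝ) ^ (k + 1) := by push_cast; ring
    rw [hcast, Real.log_pow]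
    rw [Real.mul_rpow (by positivity) hl2.le]
    rw [Real.rpow_neg (by positivity)]
    have h2pos : (0:ℝ) < (2:ℝ) ^ (k + 1) := by positivity
    have hkp : (0:ℝ) < ((k + 1 : ℕ) : ℝ) ^ p := Real.rpow_pos_of_pos (by positivity) p
    field_simp
  simp_rw [h4]
  have h5 : Summable (fun k : ℕ => ((k + 1 : ℕ) : ℝ) ^ (-p)) :=
    (summable_nat_add_iff (f := fun k : ℕ => (k : ℝ) ^ (-p)) 1).mpr
      (summable_nat_rpow.mpr (by linarith))
  exact h5.mul_right _

private theorem stmt_6_aux (M : ∀ n : ℕ, (Fin n → ℝ) → ℝ)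
    (hhom : IsHomogeneousMean M) (hmono : IsMonotoneMean M)
    (C D : ℝ) (hC : 0 < C) (hD : 0 < D) (n₀ : ℕ)
    (hest : ∀ n : ℕ, n₀ ≤ n →
      C * (Real.log n) ^ D / n ≤ M n (fun k : Fin n => 1 / ((k : ℕ) + 1))) :
    ¬ IsWeakHardyMean (Set.Ioi 0) M := by
  intro hweak
  set E : ℝ := min D 1 with hEdef
  have hE0 : 0 < E := lt_min hD one_pos
  have hED : E ≤ D := min_le_left _ _
  have hE1 : E ≤ 1 := min_le_right _ _
  set p : ℝ := 1 + E / 2 with hpdef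
  set s : ℝ := E / 2 - 1 with hsdef
  have hp1 : 1 < p := by rw [hpdef]; linarith
  have hp0 : 0 ≤ p := by linarith
  have hs1 : -1 < s := by rw [hsdef]; linarith
  have hs0 : s ≤ 0 := by rw [hsdef]; linarith
  have hsE : s = E - p := by rw [hsdef, hpdef]; ring
  have h2p : (0:ℝ) < (2:ℝ) ^ p := Real.rpow_pos_of_pos two_pos p
  -- the counterexample sequence
  set a : ℕ → ℝ := fun k => (((k:ℝ) + 2) * Real.log ((k:ℝ) + 2) ^ p)⁻¹ with hadef
  have hapos : ∀ k, 0 < a k := by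
    intro k
    have hk : (0:ℝ) ≤ (k:ℝ) := Nat.cast_nonneg k
    have hl : 0 < Real.log ((k:ℝ) + 2) := Real.log_pos (by linarith)
    rw [hadef]
    positivity
  have hamem : ∀ k, a k ∈ Set.Ioi (0:ℝ) := fun k => hapos k
  have hasum : Summable a := by
    have h := (summable_nat_add_iff (f := gfun p) 2).mpr (summable_gfun hp1)
    refine h.congr fun k => ?_
    rw [gfun_eq (by omega), hadef]
    push_cast
    ring_nf
  have hb := hweak a hamem hasum
  set c' : ℝ := C / (2 * 2 ^ p) with hc'def
  have hc' : 0 < c' := by rw [hc'def]; positivity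
  set N : ℕ := max n₀ 3 with hNdef
  have key : ∀ n : ℕ, N ≤ n →
      c' * ffun s (n + 1) ≤ M (n + 1) (fun k : Fin (n + 1) => a (k : ℕ)) := by
    intro n hn
    have hn3 : 3 ≤ n := le_trans (le_max_right _ _) hn
    have hn3' : (3:ℝ) ≤ (n:ℝ) := by exact_mod_cast hn3
    have hn0 : n₀ ≤ n + 1 := le_trans (le_trans (le_max_left _ _) hn) (Nat.le_succ n)
    have hLpos : (0:ℝ) < Real.log ((n:ℝ) + 1) := Real.log_pos (by linarith)
    have hL1 : (1:ℝ) ≤ Real.log ((n:ℝ) + 1) := by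
      rw [Real.le_log_iff_exp_le (by linarith)]
      have := Real.exp_one_lt_d9
      linarith
    have hL2pos : (0:ℝ) < Real.log ((n:ℝ) + 2) := Real.log_pos (by linarith)
    set t : ℝ := (2 * Real.log ((n:ℝ) + 2) ^ p)⁻¹ with htdef
    have ht : 0 < t := by rw [htdef]; positivity
    have hcpos : ∀ i : Fin (n + 1), (0:ℝ) < 1 / (((i:ℕ):ℝ) + 1) := by
      intro i
      have : (0:ℝ) ≤ ((i:ℕ):ℝ) := Nat.cast_nonneg _
      positivity
    have hupos : ∀ i : Fin (n + 1), 0 < t * (1 / (((i:ℕ):ℝ) + 1)) :=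
      fun i => mul_pos ht (hcpos i)
    have hle : ∀ i : Fin (n + 1), t * (1 / (((i:ℕ):ℝ) + 1)) ≤ a (i : ℕ) := by
      intro i
      set k : ℝ := ((i:ℕ):ℝ) with hkdef
      have hk0 : (0:ℝ) ≤ k := Nat.cast_nonneg _
      have hik : k ≤ (n:ℝ) := by
        rw [hkdef]
        exact_mod_cast Nat.lt_succ_iff.mp i.isLt
      have hLk : (0:ℝ) < Real.log (k + 2) := Real.log_pos (by linarith)
      have h1 : Real.log (k + 2) ^ p ≤ Real.log ((n:ℝ) + 2) ^ p :=
        Real.rpow_le_rpow hLk.le (Real.log_le_log (by linarith) (by linarith)) hp0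
      have h2 : (k + 2) * Real.log (k + 2) ^ p ≤ (2 * (k + 1)) * Real.log ((n:ℝ) + 2) ^ p := by
        have hnn : (0:ℝ) ≤ Real.log (k + 2) ^ p := Real.rpow_nonneg hLk.le p
        nlinarith
      have hpos2 : (0:ℝ) < (k + 2) * Real.log (k + 2) ^ p := by positivity
      have h3 : ((2 * (k + 1)) * Real.log ((n:ℝ) + 2) ^ p)⁻¹
          ≤ ((k + 2) * Real.log (k + 2) ^ p)⁻¹ := inv_anti₀ hpos2 h2
      have h4 : t * (1 / (k + 1)) = ((2 * (k + 1)) * Real.log ((n:ℝ) + 2) ^ p)⁻¹ := by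
        rw [htdef, mul_inv, mul_inv, mul_inv]
        field_simp
      rw [h4]
      exact h3
    have step1 : M (n + 1) (fun i : Fin (n + 1) => t * (1 / (((i:ℕ):ℝ) + 1)))
        ≤ M (n + 1) (fun k : Fin (n + 1) => a (k : ℕ)) :=
      hmono (n + 1) _ _ hupos hle
    have step2 : M (n + 1) (fun i : Fin (n + 1) => t * (1 / (((i:ℕ):ℝ) + 1)))
        = t * M (n + 1) (fun i : Fin (n + 1) => 1 / (((i:ℕ):ℝ) + 1)) :=
      hhom t ht (n + 1) _ hcpos
    have step3 := hest (n + 1) hn0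
    have hcastn : (((n:ℕ) + 1 : ℕ) : ℝ) = (n:ℝ) + 1 := by push_cast; ring
    rw [hcastn] at step3
    have step4 : t * (C * Real.log ((n:ℝ) + 1) ^ D / ((n:ℝ) + 1))
        ≤ M (n + 1) (fun k : Fin (n + 1) => a (k : ℕ)) := by
      calc t * (C * Real.log ((n:ℝ) + 1) ^ D / ((n:ℝ) + 1))
          ≤ t * M (n + 1) (fun i : Fin (n + 1) => 1 / (((i:ℕ):ℝ) + 1)) :=
            mul_le_mul_of_nonneg_left step3 ht.le
        _ = M (n + 1) (fun i : Fin (n + 1) => t * (1 / (((i:ℕ):ℝ) + 1))) := step2.symm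
        _ ≤ _ := step1
    refine le_trans ?_ step4
    have hfe : ffun s (n + 1) = Real.log ((n:ℝ) + 1) ^ s / ((n:ℝ) + 1) := by
      rw [ffun_eq (by omega), hcastn]
    rw [hfe]
    set L : ℝ := Real.log ((n:ℝ) + 1) with hLdef
    have hLD : L ^ E ≤ L ^ D := Real.rpow_le_rpow_of_exponent_le hL1 hED
    have hLEpos : (0:ℝ) < L ^ E := Real.rpow_pos_of_pos hLpos E
    have hLppos : (0:ℝ) < L ^ p := Real.rpow_pos_of_pos hLpos p
    have hlog2' : Real.log ((n:ℝ) + 2) ≤ 2 * L := by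
      have h5 : (n:ℝ) + 2 ≤ ((n:ℝ) + 1) ^ 2 := by nlinarith
      calc Real.log ((n:ℝ) + 2) ≤ Real.log (((n:ℝ) + 1) ^ 2) :=
            Real.log_le_log (by linarith) h5
        _ = 2 * L := by rw [Real.log_pow]; norm_num [hLdef]
    have h6 : Real.log ((n:ℝ) + 2) ^ p ≤ (2:ℝ) ^ p * L ^ p := by
      calc Real.log ((n:ℝ) + 2) ^ p ≤ (2 * L) ^ p :=
            Real.rpow_le_rpow hL2pos.le hlog2' hp0
        _ = (2:ℝ) ^ p * L ^ p := Real.mul_rpow (by norm_num) hLpos.le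
    have h7 : ((2:ℝ) * ((2:ℝ) ^ p * L ^ p))⁻¹ ≤ t := by
      rw [htdef]
      exact inv_anti₀ (by positivity) (by nlinarith)
    have hLs : L ^ s = L ^ E / L ^ p := by
      rw [← Real.rpow_sub hLpos, ← hsE]
    have heq : c' * (L ^ s / ((n:ℝ) + 1))
        = ((2:ℝ) * ((2:ℝ) ^ p * L ^ p))⁻¹ * (C * L ^ E / ((n:ℝ) + 1)) := by
      rw [hc'def, hLs]
      field_simp
    rw [heq]
    have hnum : (0:ℝ) ≤ C * L ^ E / ((n:ℝ) + 1) := by positivity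
    calc ((2:ℝ) * ((2:ℝ) ^ p * L ^ p))⁻¹ * (C * L ^ E / ((n:ℝ) + 1))
        ≤ t * (C * L ^ E / ((n:ℝ) + 1)) := mul_le_mul_of_nonneg_right h7 hnum
      _ ≤ t * (C * L ^ D / ((n:ℝ) + 1)) := by
          apply mul_le_mul_of_nonneg_left _ ht.le
          apply div_le_div_of_nonneg_right _ (by positivity)
          exact mul_le_mul_of_nonneg_left hLD hC.le
  -- derive the contradiction
  have hshift := (summable_nat_add_iff
    (f := fun n => M (n + 1) (fun k : Fin (n + 1) => a (k : ℕ))) N).mpr hb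
  have hcomp : Summable (fun n : ℕ => c' * ffun s (n + N + 1)) := by
    refine Summable.of_nonneg_of_le (fun n => mul_nonneg hc'.le (ffun_nonneg s _))
      (fun n => key (n + N) (Nat.le_add_left N n)) hshift
  have hff : Summable (fun n : ℕ => ffun s (n + (N + 1))) := by
    have h := hcomp.mul_left c'⁻¹
    refine h.congr fun n => ?_
    rw [inv_mul_cancel_left₀ hc'.ne', Nat.add_assoc]
  exact not_summable_ffun hs1 hs0 ((summable_nat_add_iff (f := ffun s) (N + 1)).mp hff)

theorem stmt_6 (M : ∀ n : ℕ, (Fin n → ℝ) → ℝ)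
    (hmean : IsMeanOn (Set.Ioi 0) M)
    (hhom : IsHomogeneousMean M) (hmono : IsMonotoneMean M)
    (hrep : IsRepetitionInvariant M)
    (C D : ℝ) (hC : 0 < C) (hD : 0 < D) (n₀ : ℕ)
    (hest : ∀ n : ℕ, n₀ ≤ n →
      C * (Real.log n) ^ D / n ≤ M n (fun k : Fin n => 1 / ((k : ℕ) + 1))) :
    ¬ IsWeakHardyMean (Set.Ioi 0) M := by
  exact stmt_6_aux M hhom hmono C D hC hD n₀ hest
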